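/- Let T be a triangulated category in which there exists an object X with n·id_{X/n} ≠ 0 for some cone X/n of n·id_X and some n ≥ 2. Then T admits no biexact pairing ⊗: D^b(ℤ) × T → T which is unital with respect to the derived tensor product; in particular T is not algebraic. -/

import Mathlib

open CategoryTheory Category Limits Pretriangulated

/-- Let `C` be a triangulated category containing an object `X` with
`n • 𝟙 (X/n) ≠ 0` for some cone `X/n` of `n • 𝟙 X` and some `n ≥ 2`.  Then `C`
admits no biexact pairing `⊗ : D^b(ℤ) × C → C` which is unital with respect to
the derived tensor product; in particular `C` is not algebraic.  (Here
`D^b(ℤ)` is abstracted as any triangulated category `D` with objects `Z`, `Zn`,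
a distinguished triangle `Z --n•--> Z --> Zn --> Z⟦1⟧` and `n • 𝟙 Zn = 0`, as
hold for `ℤ` and `ℤ/n` in `D^b(ℤ)`.) -/
theorem stmt19 {C : Type*} [Category C] [Preadditive C] [HasZeroObject C]
    [HasShift C ℤ] [∀ n : ℤ, (shiftFunctor C n).Additive] [Pretriangulated C]
    (n : ℕ) (hn : 2 ≤ n) (X Xn : C) (π : X ⟶ Xn) (δ : Xn ⟶ X⟦(1 : ℤ)⟧)
    (hT : Triangle.mk ((n : ℤ) • 𝟙 X) π δ ∈ distTriang C)
    (hXn : (n : ℤ) • 𝟙 Xn ≠ 0) :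
    ∀ (D : Type*) (_ : Category D) (_ : Preadditive D) (_ : HasZeroObject D)
      (_ : HasShift D ℤ) (_ : ∀ n : ℤ, (shiftFunctor D n).Additive)
      (_ : Pretriangulated D)
      (P : D ⥤ C ⥤ C) (_ : P.Additive) (_ : ∀ d : D, (P.obj d).Additive)
      (_ : ∀ (Y : C) (T : Triangle D), T ∈ (distTriang D) →
        ∃ δ' : (P.obj T.obj₃).obj Y ⟶ ((P.obj T.obj₁).obj Y)⟦(1 : ℤ)⟧,
          Triangle.mk ((P.map T.mor₁).app Y) ((P.map T.mor₂).app Y) δ' ∈ distTriang C)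
      (_ : ∀ (d : D) (T : Triangle C), T ∈ (distTriang C) →
        ∃ δ' : (P.obj d).obj T.obj₃ ⟶ ((P.obj d).obj T.obj₁)⟦(1 : ℤ)⟧,
          Triangle.mk ((P.obj d).map T.mor₁) ((P.obj d).map T.mor₂) δ' ∈ distTriang C)
      (Z Zn : D) (_ : P.obj Z ≅ 𝟭 C)
      (g : Z ⟶ Zn) (h : Zn ⟶ Z⟦(1 : ℤ)⟧)
      (_ : Triangle.mk ((n : ℤ) • 𝟙 Z) g h ∈ distTriang D)
      (_ : (n : ℤ) • 𝟙 Zn = 0),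
      False := by
  intro D _ _ _ _ _ _ P hP _ hEx _ Z Zn e g h hTD hZn
  obtain ⟨δ', hT'⟩ := hEx X _ hTD
  have hmor : (P.map ((Triangle.mk ((n:ℤ) • 𝟙 Z) g h).mor₁)).app X
      = (n : ℤ) • 𝟙 ((P.obj Z).obj X) := by
    show (P.map ((n:ℤ) • 𝟙 Z)).app X = _
    rw [P.map_zsmul, P.map_id]; simp
  rw [hmor] at hT'
  let eX : (P.obj Z).obj X ≅ X := e.app X
  have comm : ((n : ℤ) • 𝟙 ((P.obj Z).obj X)) ≫ eX.hom = eX.hom ≫ ((n : ℤ) • 𝟙 X) := by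
    simp
  let f := isoTriangleOfIso₁₂ _ _ hT' hT eX eX comm
  have f3 := f.hom.hom₃
  have hzero : (n : ℤ) • 𝟙 ((P.obj Zn).obj X) = 0 := by
    have : (P.map ((n : ℤ) • 𝟙 Zn)).app X = (n : ℤ) • 𝟙 ((P.obj Zn).obj X) := by
      rw [P.map_zsmul, P.map_id]; simp
    rw [hZn, P.map_zero] at this
    exact this.symm.trans rfl
  apply hXn
  have : (n : ℤ) • 𝟙 Xn = (Triangle.π₃.mapIso f).inv ≫ ((n : ℤ) • 𝟙 ((P.obj Zn).obj X)) ≫ (Triangle.π₃.mapIso f).hom := by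
    exact (by rw [Preadditive.zsmul_comp, Preadditive.comp_zsmul, id_comp, Iso.inv_hom_id]; rfl : (n : ℤ) • 𝟙 Xn = (Triangle.π₃.mapIso f).inv ≫ ((n : ℤ) • 𝟙 _) ≫ (Triangle.π₃.mapIso f).hom)
  rw [this, hzero]
  exact (by rw [Limits.zero_comp, Limits.comp_zero] : (Triangle.π₃.mapIso f).inv ≫ (0 : _ ⟶ _) ≫ (Triangle.π₃.mapIso f).hom = 0)
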